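/- arXiv:1512.05583 — 3 statements merged into one kernel-verified Lean document; each statement's English description precedes it below -/
import Mathlib

section
/- Let f : [a,b] → ℝ be continuously differentiable with a < b. Then sup_{t ∈ [a,b]} f(t)² ≤ (2/(b-a)) ∫_a^b f(s)² ds + 2(b-a) ∫_a^b f'(s)² ds. -/
open intervalIntegral

private lemma ftc_sq (a b : ℝ) (hab : a < b) (f f' : ℝ → ℝ)
    (hderiv : ∀ t ∈ Set.Icc a b, HasDerivWithinAt f (f' t) (Set.Icc a b) t)
    (hcont : ContinuousOn f' (Set.Icc a b))
    (c d : ℝ) (hc : c ∈ Set.Icc a b) (hd : d ∈ Set.Icc a b) (hcd : c ≤ d) :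
    f d ^ 2 - f c ^ 2 = ∫ s in c..d, 2 * f s * f' s := by
  have hfc : ContinuousOn f (Set.Icc a b) := fun x hx => (hderiv x hx).continuousWithinAt
  have hsub : Set.Icc c d ⊆ Set.Icc a b := Set.Icc_subset_Icc hc.1 hd.2
  refine (integral_eq_sub_of_hasDeriv_right_of_le hcd
    ((hfc.pow 2).mono hsub) ?_ ?_).symm
  · intro x hx
    have hxab : x ∈ Set.Ioo a b := ⟨lt_of_le_of_lt hc.1 hx.1, lt_of_lt_of_le hx.2 hd.2⟩
    have hmem : Set.Icc a b ∈ nhds x := Icc_mem_nhds hxab.1 hxab.2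
    have h1 : HasDerivAt f (f' x) x :=
      (hderiv x (Set.mem_Icc_of_Ioo hxab)).hasDerivAt hmem
    have h2 : HasDerivAt (fun s => f s ^ 2) (2 * f x * f' x) x := by
      have := h1.pow 2
      exact (by simpa [mul_comm, mul_assoc, mul_left_comm] using this : HasDerivAt (f ^ 2) (2 * f x * f' x) x)
    exact h2.hasDerivWithinAt
  · apply ContinuousOn.intervalIntegrable
    rw [Set.uIcc_of_le hcd]
    exact ((continuousOn_const.mul (hfc.mono hsub)).mul (hcont.mono hsub))

theorem stmt2 (a b : ℝ) (hab : a < b) (f f' : ℝ → ℝ)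
    (hderiv : ∀ t ∈ Set.Icc a b, HasDerivWithinAt f (f' t) (Set.Icc a b) t)
    (hcont : ContinuousOn f' (Set.Icc a b)) :
    ∀ t ∈ Set.Icc a b,
      (f t)^2 ≤ (2/(b-a)) * ∫ s in a..b, (f s)^2 + 2*(b-a) * ∫ s in a..b, (f' s)^2 := by
  intro t ht
  have hba : (0:ℝ) < b - a := by linarith
  have hfc : ContinuousOn f (Set.Icc a b) := fun x hx => (hderiv x hx).continuousWithinAt
  -- integrabilities
  have hint_f2 : IntervalIntegrable (fun s => f s ^ 2) MeasureTheory.volume a b := by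
    apply ContinuousOn.intervalIntegrable
    rw [Set.uIcc_of_le hab.le]; exact hfc.pow 2
  have hint_f'2 : IntervalIntegrable (fun s => f' s ^ 2) MeasureTheory.volume a b := by
    apply ContinuousOn.intervalIntegrable
    rw [Set.uIcc_of_le hab.le]; exact hcont.pow 2
  have hint_abs : IntervalIntegrable (fun s => |2 * f s * f' s|) MeasureTheory.volume a b := by
    apply ContinuousOn.intervalIntegrable
    rw [Set.uIcc_of_le hab.le]
    exact ((continuousOn_const.mul hfc).mul hcont).abs
  -- min point of f^2
  obtain ⟨c, hc, hmin⟩ := (isCompact_Icc (a := a) (b := b)).exists_isMinOn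
    (Set.nonempty_Icc.mpr hab.le) (hfc.pow 2)
  -- min value ≤ average
  have havg : (b - a) * f c ^ 2 ≤ ∫ s in a..b, f s ^ 2 := by
    have := intervalIntegral.integral_mono_on hab.le
      (_root_.intervalIntegrable_const (c := f c ^ 2) (μ := MeasureTheory.volume)) hint_f2
      (fun x hx => hmin hx)
    simpa [mul_comm] using this
  -- integrability of 2 f f' on subintervals, and domination by ∫ |..| over [a,b]
  have hsubint : ∀ u v : ℝ, u ∈ Set.Icc a b → v ∈ Set.Icc a b → u ≤ v →
      (∫ s in u..v, 2 * f s * f' s) ≤ ∫ s in a..b, |2 * f s * f' s| ∧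
      (∫ s in u..v, -(2 * f s * f' s)) ≤ ∫ s in a..b, |2 * f s * f' s| := by
    intro u v hu hv huv
    have hsub : Set.Icc u v ⊆ Set.Icc a b := Set.Icc_subset_Icc hu.1 hv.2
    have hsub' : Set.uIcc u v ⊆ Set.uIcc a b := by
      rw [Set.uIcc_of_le huv, Set.uIcc_of_le hab.le]; exact hsub
    have hcont2 : ContinuousOn (fun s => 2 * f s * f' s) (Set.Icc u v) :=
      ((continuousOn_const.mul hfc).mul hcont).mono hsub
    have hint1 : IntervalIntegrable (fun s => 2 * f s * f' s) MeasureTheory.volume u v := by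
      apply ContinuousOn.intervalIntegrable
      rwa [Set.uIcc_of_le huv]
    have hintabs : IntervalIntegrable (fun s => |2 * f s * f' s|) MeasureTheory.volume u v :=
      hint_abs.mono_set hsub'
    have hstep : (∫ s in u..v, |2 * f s * f' s|) ≤ ∫ s in a..b, |2 * f s * f' s| :=
      intervalIntegral.integral_mono_interval hu.1 huv hv.2
        (Filter.Eventually.of_forall (fun x => abs_nonneg _)) hint_abs
    constructor
    · calc (∫ s in u..v, 2 * f s * f' s) ≤ ∫ s in u..v, |2 * f s * f' s| :=
            intervalIntegral.integral_mono_on huv hint1 hintabs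
              (fun x _ => le_abs_self _)
        _ ≤ _ := hstep
    · calc (∫ s in u..v, -(2 * f s * f' s)) ≤ ∫ s in u..v, |2 * f s * f' s| :=
            intervalIntegral.integral_mono_on huv hint1.neg hintabs
              (fun x _ => neg_le_abs _)
        _ ≤ _ := hstep
  -- f t ^ 2 ≤ f c ^ 2 + ∫ |2 f f'|
  have hkey : f t ^ 2 ≤ f c ^ 2 + ∫ s in a..b, |2 * f s * f' s| := by
    rcases le_total c t with hct | htc
    · have h1 := ftc_sq a b hab f f' hderiv hcont c t hc ht hct
      have h2 := (hsubint c t hc ht hct).1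
      linarith
    · have h1 := ftc_sq a b hab f f' hderiv hcont t c ht hc htc
      have h2 := (hsubint t c ht hc htc).2
      rw [intervalIntegral.integral_neg] at h2
      linarith
  -- AM-GM pointwise: |2 f f'| ≤ f^2/(b-a) + (b-a) f'^2
  have hamgm : (∫ s in a..b, |2 * f s * f' s|)
      ≤ ∫ s in a..b, (f s ^ 2 / (b - a) + (b - a) * f' s ^ 2) := by
    apply intervalIntegral.integral_mono_on hab.le hint_abs
    · exact (hint_f2.div_const _).add (hint_f'2.const_mul _)
    · intro x _
      have h1 : (b-a)*(2*(f x)*(f' x)) ≤ (f x)^2 + (b-a)^2*(f' x)^2 := by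
        nlinarith [sq_nonneg (f x - (b-a)*(f' x))]
      have h2 : (b-a)*(-(2*(f x)*(f' x))) ≤ (f x)^2 + (b-a)^2*(f' x)^2 := by
        nlinarith [sq_nonneg (f x + (b-a)*(f' x))]
      have h3 : (b-a)*|2 * f x * f' x| ≤ (f x)^2 + (b-a)^2*(f' x)^2 := by
        rcases abs_cases (2 * f x * f' x) with ⟨he, _⟩ | ⟨he, _⟩ <;> rw [he]
        · exact h1
        · exact h2
      have e : f x ^ 2 / (b - a) + (b - a) * f' x ^ 2
          = ((f x)^2 + (b-a)^2*(f' x)^2)/(b-a) := by field_simp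
      rw [e, le_div_iff₀ hba, mul_comm]
      exact h3
  have hsplit : (∫ s in a..b, (f s ^ 2 / (b - a) + (b - a) * f' s ^ 2))
      = (1/(b-a)) * (∫ s in a..b, f s ^ 2) + (b-a)^2 * ((∫ s in a..b, f' s ^ 2) / (b-a)) := by
    rw [intervalIntegral.integral_add (hint_f2.div_const _) (hint_f'2.const_mul _),
      intervalIntegral.integral_div, intervalIntegral.integral_const_mul]
    field_simp
  -- RHS rewrite
  have hC : (2/(b-a)) * ∫ s in a..b, (f s)^2 + 2*(b-a) * ∫ s in a..b, (f' s)^2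
      = (2/(b-a)) * (∫ s in a..b, (f s)^2) + 4*(b-a) * ∫ s in a..b, (f' s)^2 := by
    rw [intervalIntegral.integral_add hint_f2
      (_root_.intervalIntegrable_const (c := 2*(b-a) * ∫ s in a..b, (f' s)^2)),
      intervalIntegral.integral_const]
    field_simp
    ring
  rw [hC]
  have hf'2nonneg : 0 ≤ ∫ s in a..b, f' s ^ 2 :=
    intervalIntegral.integral_nonneg hab.le (fun x _ => sq_nonneg _)
  have hsplit' : (∫ s in a..b, (f s ^ 2 / (b - a) + (b - a) * f' s ^ 2))
      = (1/(b-a)) * (∫ s in a..b, f s ^ 2) + (b-a) * (∫ s in a..b, f' s ^ 2) := by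
    rw [hsplit]; field_simp
  rw [hsplit'] at hamgm
  have h3 : (b - a) * (∫ s in a..b, f' s ^ 2) ≤ 4 * (b-a) * ∫ s in a..b, f' s ^ 2 := by
    nlinarith
  have h4 : f c ^ 2 ≤ (1/(b-a)) * ∫ s in a..b, f s ^ 2 := by
    rw [← sub_nonneg]
    have e : (1/(b-a)) * (∫ s in a..b, f s ^ 2) - f c ^ 2
        = (1/(b-a)) * ((∫ s in a..b, f s ^ 2) - (b-a) * f c ^ 2) := by field_simp
    rw [e]
    exact mul_nonneg (by positivity) (sub_nonneg.mpr havg)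
  have : (2/(b-a)) * (∫ s in a..b, f s ^ 2)
      = (1/(b-a)) * (∫ s in a..b, f s ^ 2) + (1/(b-a)) * (∫ s in a..b, f s ^ 2) := by ring
  linarith
end

section
/- Let X_N(t) = (1/√N) ∑_{n=1}^N [a_n cos(nt/N) + b_n sin(nt/N)] with a_n, b_n i.i.d., centered, unit variance. Then for every compact interval I of length |I| and every k ≥ 0, E[ sup_{t∈I} |X_N^{(k)}(t)|² ] ≤ 2(1 + |I|²). -/
open MeasureTheory ProbabilityTheory

section helpersdecl

/-- rotation by -90 degrees on pairs -/
def stmt12rot (p : ℝ × ℝ) : ℝ × ℝ := (p.2, -p.1)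

lemma stmt12rot_lin (k : ℕ) : ∃ P Q R S : ℝ,
    (∀ x y : ℝ, stmt12rot^[k] (x, y) = (P * x + Q * y, R * x + S * y)) ∧
    P ^ 2 + Q ^ 2 = 1 ∧ R ^ 2 + S ^ 2 = 1 ∧ P * R + Q * S = 0 := by
  induction k with
  | zero =>
    exact ⟨1, 0, 0, 1, fun x y => by simp, by norm_num, by norm_num, by norm_num⟩
  | succ k ih =>
    obtain ⟨P, Q, R, S, h, h1, h2, h3⟩ := ih
    refine ⟨R, S, -P, -Q, fun x y => ?_, h2, by nlinarith, by nlinarith⟩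
    rw [Function.iterate_succ_apply', h x y]
    simp only [stmt12rot, Prod.mk.injEq]
    exact ⟨trivial, by ring⟩

lemma stmt12l2mul {α : Type*} [MeasurableSpace α] {μ : Measure α} {f g : α → ℝ}
    (hf : MemLp f 2 μ) (hg : MemLp g 2 μ) : Integrable (fun x => f x * g x) μ := by
  have h : MemLp (f • g) 1 μ := hg.smul hf
  exact memLp_one_iff_integrable.mp h

lemma stmt12cs {f : ℝ → ℝ} {c d : ℝ} (hcd : c ≤ d) (hf : Continuous f) :
    (∫ s in c..d, |f s|) ^ 2 ≤ (d - c) * ∫ s in c..d, f s ^ 2 := by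
  have hvol : IsFiniteMeasure (volume.restrict (Set.Ioc c d)) := by
    constructor
    rw [Measure.restrict_apply_univ, Real.volume_Ioc]
    exact ENNReal.ofReal_lt_top
  obtain ⟨M, hM⟩ := isCompact_Icc.exists_bound_of_continuousOn
    (s := Set.Icc c d) hf.continuousOn
  have hmem : MemLp (fun x => |f x|) (ENNReal.ofReal 2) (volume.restrict (Set.Ioc c d)) := by
    refine MemLp.of_bound (hf.abs.aestronglyMeasurable.restrict) M ?_
    filter_upwards [ae_restrict_mem measurableSet_Ioc] with x hx
    simpa [abs_abs] using hM x (Set.Ioc_subset_Icc_self hx)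
  have hone : MemLp (fun _ : ℝ => (1 : ℝ)) (ENNReal.ofReal 2) (volume.restrict (Set.Ioc c d)) :=
    memLp_const 1
  have hconj : Real.HolderConjugate 2 2 := ⟨by norm_num, by norm_num, by norm_num⟩
  have H := integral_mul_le_Lp_mul_Lq_of_nonneg (μ := volume.restrict (Set.Ioc c d)) hconj
    (f := fun x => |f x|) (g := fun _ => (1 : ℝ))
    (Filter.Eventually.of_forall fun x => abs_nonneg _) (Filter.Eventually.of_forall fun _ => zero_le_one)
    hmem hone
  simp only [mul_one, Real.one_rpow] at H
  have h2 : ∀ x : ℝ, |f x| ^ (2 : ℝ) = f x ^ 2 := by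
    intro x
    rw [show (2:ℝ) = ((2:ℕ):ℝ) by norm_num, Real.rpow_natCast, sq_abs]
  simp only [h2] at H
  have hmeas : ∫ _ in Set.Ioc c d, (1 : ℝ) = d - c := by
    simp [Real.volume_Ioc, ENNReal.toReal_ofReal (sub_nonneg.mpr hcd), hcd]
  rw [hmeas] at H
  have hX : 0 ≤ ∫ x in Set.Ioc c d, f x ^ 2 := by
    apply integral_nonneg; intro x; positivity
  rw [intervalIntegral.integral_of_le hcd, intervalIntegral.integral_of_le hcd]
  have hL : 0 ≤ ∫ x in Set.Ioc c d, |f x| := by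
    apply integral_nonneg; intro x; exact abs_nonneg _
  calc (∫ x in Set.Ioc c d, |f x|) ^ 2
      ≤ ((∫ x in Set.Ioc c d, f x ^ 2) ^ (1/2:ℝ) * (d - c) ^ (1/2:ℝ)) ^ 2 := by
        apply pow_le_pow_left₀ hL H
    _ = (d - c) * ∫ x in Set.Ioc c d, f x ^ 2 := by
        rw [← Real.sqrt_eq_rpow, ← Real.sqrt_eq_rpow, mul_pow, Real.sq_sqrt hX,
          Real.sq_sqrt (sub_nonneg.mpr hcd)]
        ring

lemma stmt12det {f f' : ℝ → ℝ} {c d : ℝ} (hcd : c ≤ d)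
    (hf : ∀ t, HasDerivAt f (f' t) t) (hcont : Continuous f') {t : ℝ}
    (ht : t ∈ Set.Icc c d) :
    f t ^ 2 ≤ 2 * f c ^ 2 + 2 * ((d - c) * ∫ s in c..d, f' s ^ 2) := by
  have h1 : ∫ s in c..t, f' s = f t - f c :=
    intervalIntegral.integral_eq_sub_of_hasDerivAt (fun s _ => hf s)
      (hcont.intervalIntegrable c t)
  have habs : |f t| ≤ |f c| + ∫ s in c..d, |f' s| := by
    have hft : f t = f c + ∫ s in c..t, f' s := by rw [h1]; ring
    rw [hft]
    refine (abs_add_le _ _).trans (add_le_add le_rfl ?_)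
    calc |∫ s in c..t, f' s| ≤ ∫ s in c..t, |f' s| :=
          intervalIntegral.abs_integral_le_integral_abs ht.1
      _ ≤ ∫ s in c..d, |f' s| := by
          apply intervalIntegral.integral_mono_interval le_rfl ht.1 ht.2
            (Filter.Eventually.of_forall fun x => abs_nonneg _)
            (hcont.abs.intervalIntegrable c d)
  have hcs := stmt12cs hcd hcont
  have hI : 0 ≤ ∫ s in c..d, |f' s| :=
    intervalIntegral.integral_nonneg hcd fun u _ => abs_nonneg _
  nlinarith [sq_abs (f t), sq_abs (f c), abs_nonneg (f c), abs_nonneg (f t),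
    sq_nonneg (|f c| - ∫ s in c..d, |f' s|)]


noncomputable def stmt12g {Ω : Type*} (N : ℕ) (a b : ℕ → Ω → ℝ) (j : ℕ) (ω : Ω) (t : ℝ) : ℝ :=
  (1 / Real.sqrt N) * ∑ n ∈ Finset.Icc 1 N, ((n : ℝ) / N) ^ j *
    ((stmt12rot^[j] (a n ω, b n ω)).1 * Real.cos (n * t / N) +
      (stmt12rot^[j] (a n ω, b n ω)).2 * Real.sin (n * t / N))

lemma stmt12g_hasDerivAt {Ω : Type*} (N : ℕ) (a b : ℕ → Ω → ℝ) (j : ℕ) (ω : Ω) (t : ℝ) :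
    HasDerivAt (stmt12g N a b j ω) (stmt12g N a b (j + 1) ω t) t := by
  have H : ∀ n : ℕ, HasDerivAt (fun t : ℝ => ((n : ℝ) / N) ^ j *
      ((stmt12rot^[j] (a n ω, b n ω)).1 * Real.cos (n * t / N) +
        (stmt12rot^[j] (a n ω, b n ω)).2 * Real.sin (n * t / N)))
      (((n : ℝ) / N) ^ (j + 1) *
      ((stmt12rot^[j + 1] (a n ω, b n ω)).1 * Real.cos (n * t / N) +
        (stmt12rot^[j + 1] (a n ω, b n ω)).2 * Real.sin (n * t / N))) t := by
    intro n
    have hlin : HasDerivAt (fun t : ℝ => (n : ℝ) * t / N) ((n : ℝ) / N) t := by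
      simpa using ((hasDerivAt_id t).const_mul (n : ℝ)).div_const (N : ℝ)
    have hcos : HasDerivAt (fun t : ℝ => Real.cos ((n : ℝ) * t / N))
        (-Real.sin ((n : ℝ) * t / N) * ((n : ℝ) / N)) t :=
      (Real.hasDerivAt_cos _).comp t hlin
    have hsin : HasDerivAt (fun t : ℝ => Real.sin ((n : ℝ) * t / N))
        (Real.cos ((n : ℝ) * t / N) * ((n : ℝ) / N)) t :=
      (Real.hasDerivAt_sin _).comp t hlin
    have h := ((hcos.const_mul ((stmt12rot^[j] (a n ω, b n ω)).1)).add
      (hsin.const_mul ((stmt12rot^[j] (a n ω, b n ω)).2))).const_mul (((n : ℝ) / N) ^ j)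
    refine h.congr_deriv ?_
    rw [Function.iterate_succ_apply']
    simp only [stmt12rot]
    ring
  have h2 := (HasDerivAt.fun_sum (fun n (_ : n ∈ Finset.Icc 1 N) => H n)).const_mul
    (1 / Real.sqrt N)
  exact h2

lemma stmt12g_cont {Ω : Type*} (N : ℕ) (a b : ℕ → Ω → ℝ) (j : ℕ) (ω : Ω) :
    Continuous (stmt12g N a b j ω) :=
  Differentiable.continuous (fun t => (stmt12g_hasDerivAt N a b j ω t).differentiableAt)

lemma stmt12g_iter {Ω : Type*} (N : ℕ) (a b : ℕ → Ω → ℝ) (j : ℕ) (ω : Ω) :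
    iteratedDeriv j (fun s => (1 / Real.sqrt N) * ∑ n ∈ Finset.Icc 1 N,
      (a n ω * Real.cos (n * s / N) + b n ω * Real.sin (n * s / N)))
      = stmt12g N a b j ω := by
  induction j with
  | zero =>
    funext t
    simp [stmt12g, iteratedDeriv_zero]
  | succ j ih =>
    rw [iteratedDeriv_succ, ih]
    funext t
    exact (stmt12g_hasDerivAt N a b j ω t).deriv

end helpersdecl

set_option maxHeartbeats 4000000 in
theorem stmt12 {Ω : Type*} [MeasureSpace Ω] [IsProbabilityMeasure (ℙ : Measure Ω)]
    (N : ℕ) (hN : 1 ≤ N) (a b : ℕ → Ω → ℝ)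
    (hmeasa : ∀ n, Measurable (a n)) (hmeasb : ∀ n, Measurable (b n))
    (hindep : iIndepFun (Sum.elim a b) ℙ)
    (hid : ∀ i j : ℕ ⊕ ℕ, IdentDistrib (Sum.elim a b i) (Sum.elim a b j) ℙ ℙ)
    (hInta : ∀ n, Integrable (fun ω => (a n ω)^2) ℙ)
    (hmeana : ∀ n, ∫ ω, a n ω = 0)
    (hvara : ∀ n, ∫ ω, (a n ω)^2 = 1)
    (c d : ℝ) (hcd : c ≤ d) (k : ℕ) :
    (∫ ω, ⨆ t ∈ Set.Icc c d, |iteratedDeriv k (fun s => (1 / Real.sqrt N) *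
        ∑ n ∈ Finset.Icc 1 N,
          (a n ω * Real.cos (n * s / N) + b n ω * Real.sin (n * s / N))) t|^2)
      ≤ 2 * (1 + (d - c)^2) := by
  have hNpos : (0:ℝ) < N := by exact_mod_cast hN
  set invN : ℝ := 1 / Real.sqrt N with hinvN
  have hsq : invN ^ 2 = 1 / N := by
    rw [hinvN, div_pow, one_pow, Real.sq_sqrt hNpos.le]
  -- basic L² facts
  have hL2a : ∀ n, MemLp (a n) 2 ℙ := fun n =>
    (memLp_two_iff_integrable_sq (hmeasa n).aestronglyMeasurable).mpr (hInta n)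
  have hid' : ∀ n, IdentDistrib (a n) (b n) ℙ ℙ := fun n => hid (Sum.inl n) (Sum.inr n)
  have hsqid : ∀ n, IdentDistrib (fun ω => (a n ω)^2) (fun ω => (b n ω)^2) ℙ ℙ := fun n =>
    (hid' n).comp (measurable_id.pow_const 2)
  have hIntb : ∀ n, Integrable (fun ω => (b n ω)^2) ℙ := fun n =>
    (hsqid n).integrable_iff.mp (hInta n)
  have hL2b : ∀ n, MemLp (b n) 2 ℙ := fun n =>
    (memLp_two_iff_integrable_sq (hmeasb n).aestronglyMeasurable).mpr (hIntb n)
  have hmeanb : ∀ n, ∫ ω, b n ω = 0 := fun n => ((hid' n).integral_eq).symm.trans (hmeana n)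
  have hvarb : ∀ n, ∫ ω, (b n ω)^2 = 1 := fun n => ((hsqid n).integral_eq).symm.trans (hvara n)
  have hIa : ∀ n, Integrable (a n) ℙ := fun n => (hL2a n).integrable one_le_two
  have hIb : ∀ n, Integrable (b n) ℙ := fun n => (hL2b n).integrable one_le_two
  -- orthogonality
  have hAA : ∀ m n, ∫ ω, a m ω * a n ω = if m = n then 1 else 0 := by
    intro m n
    by_cases h : m = n
    · subst h
      rw [if_pos rfl, ← hvara m]
      congr 1; funext ω; ring
    · rw [if_neg h]
      have hI : IndepFun (a m) (a n) ℙ :=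
        hindep.indepFun (show (Sum.inl m : ℕ ⊕ ℕ) ≠ Sum.inl n by simpa using h)
      have h2 : ∫ ω, a m ω * a n ω = (∫ ω, a m ω) * ∫ ω, a n ω :=
        hI.integral_mul_eq_mul_integral (hIa m).aestronglyMeasurable (hIa n).aestronglyMeasurable
      rw [h2, hmeana m, zero_mul]
  have hBB : ∀ m n, ∫ ω, b m ω * b n ω = if m = n then 1 else 0 := by
    intro m n
    by_cases h : m = n
    · subst h
      rw [if_pos rfl, ← hvarb m]
      congr 1; funext ω; ring
    · rw [if_neg h]
      have hI : IndepFun (b m) (b n) ℙ :=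
        hindep.indepFun (show (Sum.inr m : ℕ ⊕ ℕ) ≠ Sum.inr n by simpa using h)
      have h2 : ∫ ω, b m ω * b n ω = (∫ ω, b m ω) * ∫ ω, b n ω :=
        hI.integral_mul_eq_mul_integral (hIb m).aestronglyMeasurable (hIb n).aestronglyMeasurable
      rw [h2, hmeanb m, zero_mul]
  have hAB : ∀ m n, ∫ ω, a m ω * b n ω = 0 := by
    intro m n
    have hI : IndepFun (a m) (b n) ℙ :=
      hindep.indepFun (show (Sum.inl m : ℕ ⊕ ℕ) ≠ Sum.inr n by simp)
    have h2 : ∫ ω, a m ω * b n ω = (∫ ω, a m ω) * ∫ ω, b n ω :=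
      hI.integral_mul_eq_mul_integral (hIa m).aestronglyMeasurable (hIb n).aestronglyMeasurable
    rw [h2, hmeana m, zero_mul]
  have hBA : ∀ m n, ∫ ω, b m ω * a n ω = 0 := by
    intro m n
    have hI : IndepFun (b m) (a n) ℙ :=
      hindep.indepFun (show (Sum.inr m : ℕ ⊕ ℕ) ≠ Sum.inl n by simp)
    have h2 : ∫ ω, b m ω * a n ω = (∫ ω, b m ω) * ∫ ω, a n ω :=
      hI.integral_mul_eq_mul_integral (hIb m).aestronglyMeasurable (hIa n).aestronglyMeasurable
    rw [h2, hmeanb m, zero_mul]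
  -- the quadratic building block
  have quadInt : ∀ (m n : ℕ) (p q r s : ℝ), Integrable (fun ω =>
      p * (a m ω * a n ω) + (q * (a m ω * b n ω) + (r * (b m ω * a n ω) +
        s * (b m ω * b n ω)))) ℙ := by
    intro m n p q r s
    exact ((stmt12l2mul (hL2a m) (hL2a n)).const_mul p).add
      (((stmt12l2mul (hL2a m) (hL2b n)).const_mul q).add
        (((stmt12l2mul (hL2b m) (hL2a n)).const_mul r).add
          ((stmt12l2mul (hL2b m) (hL2b n)).const_mul s)))
  have quadVal : ∀ (m n : ℕ) (p q r s : ℝ), (∫ ω,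
      (p * (a m ω * a n ω) + (q * (a m ω * b n ω) + (r * (b m ω * a n ω) +
        s * (b m ω * b n ω))))) = if m = n then p + s else 0 := by
    intro m n p q r s
    have i1 := (stmt12l2mul (hL2a m) (hL2a n)).const_mul p
    have i2 := (stmt12l2mul (hL2a m) (hL2b n)).const_mul q
    have i3 := (stmt12l2mul (hL2b m) (hL2a n)).const_mul r
    have i4 := (stmt12l2mul (hL2b m) (hL2b n)).const_mul s
    have i34 : Integrable (fun ω => r * (b m ω * a n ω) + s * (b m ω * b n ω)) ℙ := i3.add i4
    have i234 : Integrable (fun ω => q * (a m ω * b n ω) + (r * (b m ω * a n ω) +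
      s * (b m ω * b n ω))) ℙ := i2.add i34
    rw [integral_add i1 i234, integral_add i2 i34,
      integral_add i3 i4, integral_const_mul, integral_const_mul, integral_const_mul,
      integral_const_mul, hAA, hAB, hBA, hBB]
    by_cases h : m = n <;> simp [h]
  -- master lemma, fixed coefficients
  have masterB : ∀ (γ δ : ℕ → ℝ),
      Integrable (fun ω => (∑ n ∈ Finset.Icc 1 N, (γ n * a n ω + δ n * b n ω))^2) ℙ ∧
      ∫ ω, (∑ n ∈ Finset.Icc 1 N, (γ n * a n ω + δ n * b n ω))^2
        = ∑ n ∈ Finset.Icc 1 N, (γ n ^ 2 + δ n ^ 2) := by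
    intro γ δ
    have key : (fun ω => (∑ n ∈ Finset.Icc 1 N, (γ n * a n ω + δ n * b n ω))^2)
        = fun ω => ∑ m ∈ Finset.Icc 1 N, ∑ n ∈ Finset.Icc 1 N,
          ((γ m * γ n) * (a m ω * a n ω) + ((γ m * δ n) * (a m ω * b n ω) +
            ((δ m * γ n) * (b m ω * a n ω) + (δ m * δ n) * (b m ω * b n ω)))) := by
      funext ω
      rw [sq, Finset.sum_mul_sum]
      exact Finset.sum_congr rfl fun m _ => Finset.sum_congr rfl fun n _ => by ring
    constructor
    · rw [key]
      exact integrable_finset_sum _ fun m _ => integrable_finset_sum _ fun n _ =>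
        quadInt m n _ _ _ _
    · rw [key, integral_finset_sum _ fun m _ => integrable_finset_sum _ fun n _ =>
        quadInt m n _ _ _ _]
      refine Finset.sum_congr rfl fun m hm => ?_
      rw [integral_finset_sum _ fun n _ => quadInt m n _ _ _ _]
      have : ∀ n ∈ Finset.Icc 1 N, (∫ ω,
          ((γ m * γ n) * (a m ω * a n ω) + ((γ m * δ n) * (a m ω * b n ω) +
            ((δ m * γ n) * (b m ω * a n ω) + (δ m * δ n) * (b m ω * b n ω)))))
          = if m = n then γ m * γ n + δ m * δ n else 0 := fun n _ => quadVal m n _ _ _ _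
      rw [Finset.sum_congr rfl this, Finset.sum_ite_eq (Finset.Icc 1 N) m
        (fun n => γ m * γ n + δ m * δ n), if_pos hm]
      ring

  -- master lemma, time-dependent coefficients
  have masterC : ∀ (γ δ : ℕ → ℝ → ℝ), (∀ n, Continuous (γ n)) → (∀ n, Continuous (δ n)) →
      Integrable (fun ω => ∫ t in c..d,
        (∑ n ∈ Finset.Icc 1 N, (γ n t * a n ω + δ n t * b n ω))^2) ℙ ∧
      ∫ ω, (∫ t in c..d, (∑ n ∈ Finset.Icc 1 N, (γ n t * a n ω + δ n t * b n ω))^2)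
        = ∑ n ∈ Finset.Icc 1 N,
            ((∫ t in c..d, γ n t * γ n t) + ∫ t in c..d, δ n t * δ n t) := by
    intro γ δ hγ hδ
    have keyt : (fun ω => ∫ t in c..d,
        (∑ n ∈ Finset.Icc 1 N, (γ n t * a n ω + δ n t * b n ω))^2)
        = fun ω => ∑ m ∈ Finset.Icc 1 N, ∑ n ∈ Finset.Icc 1 N,
          ((∫ t in c..d, γ m t * γ n t) * (a m ω * a n ω) +
            ((∫ t in c..d, γ m t * δ n t) * (a m ω * b n ω) +
              ((∫ t in c..d, δ m t * γ n t) * (b m ω * a n ω) +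
                (∫ t in c..d, δ m t * δ n t) * (b m ω * b n ω)))) := by
      funext ω
      have e1 : (fun t => (∑ n ∈ Finset.Icc 1 N, (γ n t * a n ω + δ n t * b n ω))^2)
          = fun t => ∑ m ∈ Finset.Icc 1 N, ∑ n ∈ Finset.Icc 1 N,
            ((γ m t * γ n t) * (a m ω * a n ω) + ((γ m t * δ n t) * (a m ω * b n ω) +
              ((δ m t * γ n t) * (b m ω * a n ω) + (δ m t * δ n t) * (b m ω * b n ω)))) := by
        funext t
        rw [sq, Finset.sum_mul_sum]
        exact Finset.sum_congr rfl fun m _ => Finset.sum_congr rfl fun n _ => by ring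
      rw [e1]
      have hc1 : ∀ m n : ℕ, Continuous fun t => (γ m t * γ n t) * (a m ω * a n ω) :=
        fun m n => ((hγ m).mul (hγ n)).mul continuous_const
      have hc2 : ∀ m n : ℕ, Continuous fun t => (γ m t * δ n t) * (a m ω * b n ω) :=
        fun m n => ((hγ m).mul (hδ n)).mul continuous_const
      have hc3 : ∀ m n : ℕ, Continuous fun t => (δ m t * γ n t) * (b m ω * a n ω) :=
        fun m n => ((hδ m).mul (hγ n)).mul continuous_const
      have hc4 : ∀ m n : ℕ, Continuous fun t => (δ m t * δ n t) * (b m ω * b n ω) :=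
        fun m n => ((hδ m).mul (hδ n)).mul continuous_const
      rw [intervalIntegral.integral_finset_sum (fun m (_ : m ∈ Finset.Icc 1 N) =>
        (Continuous.intervalIntegrable (by
          exact continuous_finset_sum _ fun n _ =>
            ((hc1 m n).add ((hc2 m n).add ((hc3 m n).add (hc4 m n))))) c d))]
      refine Finset.sum_congr rfl fun m _ => ?_
      rw [intervalIntegral.integral_finset_sum (fun n (_ : n ∈ Finset.Icc 1 N) =>
        (Continuous.intervalIntegrable (by
          exact (((hc1 m n).add ((hc2 m n).add ((hc3 m n).add (hc4 m n)))))) c d))]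
      refine Finset.sum_congr rfl fun n _ => ?_
      rw [intervalIntegral.integral_add ((hc1 m n).intervalIntegrable c d)
          (by exact ((hc2 m n).add ((hc3 m n).add (hc4 m n))).intervalIntegrable c d),
        intervalIntegral.integral_add ((hc2 m n).intervalIntegrable c d)
          (by exact ((hc3 m n).add (hc4 m n)).intervalIntegrable c d),
        intervalIntegral.integral_add ((hc3 m n).intervalIntegrable c d)
          ((hc4 m n).intervalIntegrable c d),
        intervalIntegral.integral_mul_const, intervalIntegral.integral_mul_const,
        intervalIntegral.integral_mul_const, intervalIntegral.integral_mul_const]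
    constructor
    · rw [keyt]
      exact integrable_finset_sum _ fun m _ => integrable_finset_sum _ fun n _ =>
        quadInt m n _ _ _ _
    · rw [keyt, integral_finset_sum _ fun m _ => integrable_finset_sum _ fun n _ =>
        quadInt m n _ _ _ _]
      refine Finset.sum_congr rfl fun m hm => ?_
      rw [integral_finset_sum _ fun n _ => quadInt m n _ _ _ _]
      have hq : ∀ n ∈ Finset.Icc 1 N, (∫ ω,
          ((∫ t in c..d, γ m t * γ n t) * (a m ω * a n ω) +
            ((∫ t in c..d, γ m t * δ n t) * (a m ω * b n ω) +
              ((∫ t in c..d, δ m t * γ n t) * (b m ω * a n ω) +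
                (∫ t in c..d, δ m t * δ n t) * (b m ω * b n ω)))))
          = if m = n then (∫ t in c..d, γ m t * γ n t) + ∫ t in c..d, δ m t * δ n t
            else 0 := fun n _ => quadVal m n _ _ _ _
      rw [Finset.sum_congr rfl hq, Finset.sum_ite_eq (Finset.Icc 1 N) m
        (fun n => (∫ t in c..d, γ m t * γ n t) + ∫ t in c..d, δ m t * δ n t), if_pos hm]
  -- coefficient identity
  have hcoef : ∀ (P Q R S : ℝ), P^2 + Q^2 = 1 → R^2 + S^2 = 1 → P*R + Q*S = 0 →
      ∀ x y : ℝ, (P*x + R*y)^2 + (Q*x + S*y)^2 = x^2 + y^2 := by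
    intro P Q R S h1 h2 h3 x y
    linear_combination x^2 * h1 + y^2 * h2 + 2*x*y*h3
  have hrn : ∀ n ∈ Finset.Icc 1 N, (0:ℝ) ≤ (n:ℝ)/N ∧ ((n:ℝ)/N) ≤ 1 := by
    intro n hn
    refine ⟨by positivity, ?_⟩
    rw [div_le_one hNpos]
    exact_mod_cast (Finset.mem_Icc.mp hn).2
  -- coefficients at level k (for point evaluation at c)
  obtain ⟨P, Q, R, S, hrot, h1, h2, h3⟩ := stmt12rot_lin k
  obtain ⟨P', Q', R', S', hrot', h1', h2', h3'⟩ := stmt12rot_lin (k+1)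
  set γB : ℕ → ℝ := fun n => ((n:ℝ)/N)^k * (P * Real.cos (n*c/N) + R * Real.sin (n*c/N))
    with hγB
  set δB : ℕ → ℝ := fun n => ((n:ℝ)/N)^k * (Q * Real.cos (n*c/N) + S * Real.sin (n*c/N))
    with hδB
  have hgc : ∀ ω, stmt12g N a b k ω c
      = (1/Real.sqrt N) * ∑ n ∈ Finset.Icc 1 N, (γB n * a n ω + δB n * b n ω) := by
    intro ω
    unfold stmt12g
    congr 1
    refine Finset.sum_congr rfl fun n _ => ?_
    rw [hrot (a n ω) (b n ω)]
    simp only [hγB, hδB]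
    ring
  have hγδB : ∀ n ∈ Finset.Icc 1 N, γB n^2 + δB n^2 ≤ 1 := by
    intro n hn
    have hxy : Real.cos (n*c/N)^2 + Real.sin (n*c/N)^2 = 1 := Real.cos_sq_add_sin_sq _
    have hco := hcoef P Q R S h1 h2 h3 (Real.cos (n*c/N)) (Real.sin (n*c/N))
    have hr := hrn n hn
    have hpow1 : (0:ℝ) ≤ ((n:ℝ)/N)^k := pow_nonneg hr.1 k
    have hpow2 : ((n:ℝ)/N)^k ≤ 1 := pow_le_one₀ hr.1 hr.2
    have e : γB n^2 + δB n^2 = (((n:ℝ)/N)^k)^2 := by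
      simp only [hγB, hδB]
      linear_combination (((n:ℝ)/N)^k)^2 * hco + (((n:ℝ)/N)^k)^2 * hxy
    rw [e]
    nlinarith
  have hBint : Integrable (fun ω => (stmt12g N a b k ω c)^2) ℙ := by
    have e : (fun ω => (stmt12g N a b k ω c)^2) = fun ω => (1/Real.sqrt N)^2 *
        (∑ n ∈ Finset.Icc 1 N, (γB n * a n ω + δB n * b n ω))^2 := by
      funext ω; rw [hgc ω, mul_pow]
    rw [e]
    exact ((masterB γB δB).1).const_mul _
  have hBval : ∫ ω, (stmt12g N a b k ω c)^2 ≤ 1 := by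
    have e : ∀ ω, (stmt12g N a b k ω c)^2 = (1/Real.sqrt N)^2 *
        (∑ n ∈ Finset.Icc 1 N, (γB n * a n ω + δB n * b n ω))^2 := by
      intro ω; rw [hgc ω, mul_pow]
    simp only [e]
    rw [integral_const_mul, (masterB γB δB).2, hsq]
    have hsum : ∑ n ∈ Finset.Icc 1 N, (γB n^2 + δB n^2) ≤ (N:ℝ) := by
      calc ∑ n ∈ Finset.Icc 1 N, (γB n^2 + δB n^2) ≤ ∑ _n ∈ Finset.Icc 1 N, (1:ℝ) :=
            Finset.sum_le_sum hγδB
        _ = N := by simp [Nat.card_Icc]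
    rw [div_mul_eq_mul_div, one_mul, div_le_one hNpos]
    exact hsum
  -- coefficients at level k+1 (for the time integral)
  set γC : ℕ → ℝ → ℝ := fun n t => ((n:ℝ)/N)^(k+1) *
    (P' * Real.cos (n*t/N) + R' * Real.sin (n*t/N)) with hγC
  set δC : ℕ → ℝ → ℝ := fun n t => ((n:ℝ)/N)^(k+1) *
    (Q' * Real.cos (n*t/N) + S' * Real.sin (n*t/N)) with hδC
  have hγCc : ∀ n, Continuous (γC n) := by
    intro n; simp only [hγC]; fun_prop
  have hδCc : ∀ n, Continuous (δC n) := by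
    intro n; simp only [hδC]; fun_prop
  have hgt : ∀ ω t, stmt12g N a b (k+1) ω t
      = (1/Real.sqrt N) * ∑ n ∈ Finset.Icc 1 N, (γC n t * a n ω + δC n t * b n ω) := by
    intro ω t
    unfold stmt12g
    congr 1
    refine Finset.sum_congr rfl fun n _ => ?_
    rw [hrot' (a n ω) (b n ω)]
    simp only [hγC, hδC]
    ring
  have eC : (fun ω => ∫ t in c..d, (stmt12g N a b (k+1) ω t)^2)
      = fun ω => (1/Real.sqrt N)^2 * ∫ t in c..d,
        (∑ n ∈ Finset.Icc 1 N, (γC n t * a n ω + δC n t * b n ω))^2 := by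
    funext ω
    rw [← intervalIntegral.integral_const_mul]
    apply intervalIntegral.integral_congr
    intro t _
    show (stmt12g N a b (k+1) ω t)^2 = (1/Real.sqrt N)^2 *
      (∑ n ∈ Finset.Icc 1 N, (γC n t * a n ω + δC n t * b n ω))^2
    rw [hgt ω t, mul_pow]
  have hCint : Integrable (fun ω => ∫ t in c..d, (stmt12g N a b (k+1) ω t)^2) ℙ := by
    rw [eC]
    exact ((masterC γC δC hγCc hδCc).1).const_mul _
  have hCval : ∫ ω, (∫ t in c..d, (stmt12g N a b (k+1) ω t)^2) ≤ d - c := by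
    rw [eC, integral_const_mul, (masterC γC δC hγCc hδCc).2, hsq]
    have hterm : ∀ n ∈ Finset.Icc 1 N,
        ((∫ t in c..d, γC n t * γC n t) + ∫ t in c..d, δC n t * δC n t) ≤ d - c := by
      intro n hn
      have hint1 : IntervalIntegrable (fun t => γC n t * γC n t) volume c d :=
        ((hγCc n).mul (hγCc n)).intervalIntegrable c d
      have hint2 : IntervalIntegrable (fun t => δC n t * δC n t) volume c d :=
        ((hδCc n).mul (hδCc n)).intervalIntegrable c d
      rw [← intervalIntegral.integral_add hint1 hint2]
      have hptw : ∀ t ∈ Set.Icc c d, γC n t * γC n t + δC n t * δC n t ≤ 1 := by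
        intro t _
        have hxy : Real.cos (n*t/N)^2 + Real.sin (n*t/N)^2 = 1 := Real.cos_sq_add_sin_sq _
        have hco := hcoef P' Q' R' S' h1' h2' h3' (Real.cos (n*t/N)) (Real.sin (n*t/N))
        have hr := hrn n hn
        have hpow1 : (0:ℝ) ≤ ((n:ℝ)/N)^(k+1) := pow_nonneg hr.1 _
        have hpow2 : ((n:ℝ)/N)^(k+1) ≤ 1 := pow_le_one₀ hr.1 hr.2
        have e : γC n t * γC n t + δC n t * δC n t = (((n:ℝ)/N)^(k+1))^2 := by
          simp only [hγC, hδC]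
          linear_combination (((n:ℝ)/N)^(k+1))^2 * hco + (((n:ℝ)/N)^(k+1))^2 * hxy
        rw [e]
        nlinarith
      calc ∫ t in c..d, (γC n t * γC n t + δC n t * δC n t)
          ≤ ∫ _t in c..d, (1:ℝ) := by
            apply intervalIntegral.integral_mono_on hcd (hint1.add hint2)
              intervalIntegrable_const hptw
        _ = d - c := by simp
    have hsum : ∑ n ∈ Finset.Icc 1 N,
        ((∫ t in c..d, γC n t * γC n t) + ∫ t in c..d, δC n t * δC n t)
          ≤ (N:ℝ) * (d - c) := by
      calc ∑ n ∈ Finset.Icc 1 N,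
          ((∫ t in c..d, γC n t * γC n t) + ∫ t in c..d, δC n t * δC n t)
            ≤ ∑ _n ∈ Finset.Icc 1 N, (d - c) := Finset.sum_le_sum hterm
        _ = (N:ℝ) * (d - c) := by simp [Nat.card_Icc, nsmul_eq_mul, mul_sub]
    have h5 : (1/(N:ℝ)) * ((N:ℝ)*(d-c)) = d - c := by field_simp
    calc (1/(N:ℝ)) * ∑ n ∈ Finset.Icc 1 N,
        ((∫ t in c..d, γC n t * γC n t) + ∫ t in c..d, δC n t * δC n t)
          ≤ (1/(N:ℝ)) * ((N:ℝ)*(d-c)) := by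
            apply mul_le_mul_of_nonneg_left hsum (by positivity)
      _ = d - c := h5
  -- pointwise domination
  have hG0 : ∀ ω, 0 ≤ 2 * (stmt12g N a b k ω c)^2 +
      2 * ((d - c) * ∫ t in c..d, (stmt12g N a b (k+1) ω t)^2) := by
    intro ω
    have h0 : 0 ≤ ∫ t in c..d, (stmt12g N a b (k+1) ω t)^2 :=
      intervalIntegral.integral_nonneg hcd fun u _ => sq_nonneg _
    have hdc : 0 ≤ d - c := sub_nonneg.mpr hcd
    have h1 := sq_nonneg (stmt12g N a b k ω c)
    have h2 := mul_nonneg hdc h0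
    linarith
  have hpt : ∀ ω, (⨆ t ∈ Set.Icc c d, |iteratedDeriv k (fun s => (1 / Real.sqrt N) *
      ∑ n ∈ Finset.Icc 1 N,
        (a n ω * Real.cos (n * s / N) + b n ω * Real.sin (n * s / N))) t|^2)
      ≤ 2 * (stmt12g N a b k ω c)^2 +
        2 * ((d - c) * ∫ t in c..d, (stmt12g N a b (k+1) ω t)^2) := by
    intro ω
    refine Real.iSup_le (fun t => Real.iSup_le (fun ht => ?_) (hG0 ω)) (hG0 ω)
    rw [stmt12g_iter N a b k ω, sq_abs]
    exact stmt12det hcd (stmt12g_hasDerivAt N a b k ω) (stmt12g_cont N a b (k+1) ω) ht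
  have hGint : Integrable (fun ω => 2 * (stmt12g N a b k ω c)^2 +
      2 * ((d - c) * ∫ t in c..d, (stmt12g N a b (k+1) ω t)^2)) ℙ :=
    (hBint.const_mul 2).add ((hCint.const_mul (d-c)).const_mul 2)
  refine le_trans (integral_mono_of_nonneg
    (Filter.Eventually.of_forall fun ω => Real.iSup_nonneg fun t =>
      Real.iSup_nonneg fun _ => by positivity)
    hGint (Filter.Eventually.of_forall hpt)) ?_
  rw [integral_add (hBint.const_mul 2) ((hCint.const_mul (d-c)).const_mul 2),
    integral_const_mul, integral_const_mul, integral_const_mul]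
  have hdc : 0 ≤ d - c := sub_nonneg.mpr hcd
  have h6 : (d - c) * (∫ ω, ∫ t in c..d, (stmt12g N a b (k+1) ω t)^2) ≤ (d-c)*(d-c) :=
    mul_le_mul_of_nonneg_left hCval hdc
  nlinarith [hBval, h6]
end

section
/- Let Z be a nonnegative integer-valued random variable such that P(Z ≥ k) ≤ C L^{k−1/2} / √(k!(k−1)!) for all k ≥ 1, for some constants C, L > 0. Then for every r > 1, E[Z^r] ≤ C ( ∑_{k=1}^∞ L^{(2k−1)/(2r)} / (k!(k−1)!)^{1/(2r)} )^r, and in particular all moments of Z are finite. -/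
open MeasureTheory ProbabilityTheory
open scoped ENNReal

private lemma summable_aux (L s : ℝ) (hL : 0 < L) (hs : 0 < s) :
    Summable (fun k : ℕ => (L ^ (2*(k:ℝ)+1) / ((Nat.factorial (k+1) : ℝ) * (Nat.factorial k : ℝ))) ^ s) := by
  set t : ℕ → ℝ := fun k => L ^ (2*(k:ℝ)+1) / ((Nat.factorial (k+1) : ℝ) * (Nat.factorial k : ℝ)) with ht
  have htpos : ∀ k, 0 < t k := by
    intro k
    apply div_pos (Real.rpow_pos_of_pos hL _)
    positivity
  apply summable_of_ratio_norm_eventually_le (r := 1/2) (by norm_num)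
  have hbase : Filter.Tendsto (fun k : ℕ => L^2 / ((k:ℝ)+1)) Filter.atTop (nhds 0) :=
    (tendsto_const_div_atTop_nhds_zero_nat (L^2)).comp (Filter.tendsto_add_atTop_nat 1) |>.congr (fun k => by simp [Function.comp, div_eq_mul_inv, add_comm 1 (k:ℝ)])
  have hrpow : Filter.Tendsto (fun x : ℝ => x ^ s) (nhds 0) (nhds 0) := by
    have := (Real.continuousAt_rpow_const 0 s (Or.inr hs.le)).tendsto
    simpa [Real.zero_rpow hs.ne'] using this
  have htend : Filter.Tendsto (fun k : ℕ => (L^2 / ((k:ℝ)+1)) ^ s) Filter.atTop (nhds 0) :=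
    hrpow.comp hbase
  have hev : ∀ᶠ k : ℕ in Filter.atTop, (L^2 / ((k:ℝ)+1)) ^ s ≤ 1/2 :=
    htend.eventually_le_const (by norm_num : (0:ℝ) < 1/2)
  filter_upwards [hev] with k hk
  have hq : (0:ℝ) ≤ L^2 / (((k:ℝ)+2)*((k:ℝ)+1)) := by positivity
  have key : t (k+1) = t k * (L^2 / (((k:ℝ)+2)*((k:ℝ)+1))) := by
    have h1 : L ^ (2*((k:ℝ)+1)+1) = L ^ (2*(k:ℝ)+1) * L ^ 2 := by
      rw [← Real.rpow_two, ← Real.rpow_add hL]; ring_nf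
    have hf1 : (0:ℝ) < (Nat.factorial (k+1) : ℝ) := by positivity
    have hf0 : (0:ℝ) < (Nat.factorial k : ℝ) := by positivity
    simp only [ht]
    push_cast [Nat.factorial_succ]
    rw [h1]
    field_simp
    ring
  have hqle : (L^2 / (((k:ℝ)+2)*((k:ℝ)+1))) ^ s ≤ (L^2 / ((k:ℝ)+1)) ^ s := by
    apply Real.rpow_le_rpow hq _ hs.le
    apply div_le_div_of_nonneg_left (by positivity) (by positivity)
    nlinarith [sq_nonneg ((k:ℝ)+1)]
  calc ‖t (k+1) ^ s‖ = (t k) ^ s * (L^2 / (((k:ℝ)+2)*((k:ℝ)+1))) ^ s := by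
        rw [Real.norm_eq_abs, abs_of_nonneg (Real.rpow_nonneg (htpos _).le _), key,
          Real.mul_rpow (htpos k).le hq]
    _ ≤ (t k) ^ s * (1/2) := by
        apply mul_le_mul_of_nonneg_left (hqle.trans hk) (Real.rpow_nonneg (htpos k).le _)
    _ = 1/2 * ‖t k ^ s‖ := by
        rw [Real.norm_eq_abs, abs_of_nonneg (Real.rpow_nonneg (htpos _).le _)]; ring

private lemma term_eq (L r : ℝ) (hL : 0 < L) (hr : 0 < r) (k : ℕ) :
    L ^ ((2 * ((k : ℝ) + 1) - 1) / (2 * r)) /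
      ((Nat.factorial (k + 1) : ℝ) * (Nat.factorial k : ℝ)) ^ (1 / (2 * r))
    = (L ^ (2*(k:ℝ)+1) / ((Nat.factorial (k+1) : ℝ) * (Nat.factorial k : ℝ))) ^ (1/(2*r)) := by
  have hF : (0:ℝ) < (Nat.factorial (k+1) : ℝ) * (Nat.factorial k : ℝ) := by positivity
  rw [show (2*((k:ℝ)+1)-1)/(2*r) = (2*(k:ℝ)+1) * (1/(2*r)) by ring,
    Real.rpow_mul hL.le, Real.div_rpow (Real.rpow_nonneg hL.le _) hF.le]

lemma core {Ω : Type*} [MeasureSpace Ω] [IsProbabilityMeasure (ℙ : Measure Ω)]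
    (Z : Ω → ℕ) (hZ : Measurable Z) (C L : ℝ) (hC : 0 < C) (hL : 0 < L)
    (hbound : ∀ k : ℕ, 1 ≤ k → (ℙ {ω | k ≤ Z ω}).toReal
        ≤ C * L ^ ((k : ℝ) - 1/2) /
          Real.sqrt ((Nat.factorial k : ℝ) * (Nat.factorial (k - 1) : ℝ)))
    (r : ℝ) (hr : 1 < r) :
    (∫⁻ ω, ENNReal.ofReal ((Z ω : ℝ) ^ r)) ≤ ENNReal.ofReal (C * (∑' k : ℕ,
          L ^ ((2 * ((k : ℝ) + 1) - 1) / (2 * r)) /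
            ((Nat.factorial (k + 1) : ℝ) * (Nat.factorial k : ℝ)) ^ (1 / (2 * r))) ^ r) := by
  have hr0 : 0 < r := lt_trans one_pos hr
  set a : ℕ → ℝ := fun k => L ^ ((2 * ((k : ℝ) + 1) - 1) / (2 * r)) /
      ((Nat.factorial (k + 1) : ℝ) * (Nat.factorial k : ℝ)) ^ (1 / (2 * r)) with ha
  have ha_nonneg : ∀ k, 0 ≤ a k := fun k => by
    apply div_nonneg (Real.rpow_nonneg hL.le _) (Real.rpow_nonneg (by positivity) _)
  have ha_summable : Summable a := by
    have := summable_aux L (1/(2*r)) hL (by positivity)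
    apply this.congr
    intro k
    exact (term_eq L r hL hr0 k).symm
  set S : ℝ := ∑' k, a k with hS
  have hS_nonneg : 0 ≤ S := tsum_nonneg ha_nonneg
  set p : ℝ≥0∞ := ENNReal.ofReal r with hp
  have hp1 : 1 ≤ p := by
    rw [hp, ← ENNReal.ofReal_one]
    exact ENNReal.ofReal_le_ofReal hr.le
  have hp0 : p ≠ 0 := by
    intro h; rw [h] at hp1; exact (not_le.mpr zero_lt_one) hp1
  have hptop : p ≠ ∞ := ENNReal.ofReal_ne_top
  have hpReal : p.toReal = r := ENNReal.toReal_ofReal hr0.le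
  set A : ℕ → Set Ω := fun k => {ω | k + 1 ≤ Z ω} with hA
  have hAmeas : ∀ k, MeasurableSet (A k) := fun k => hZ measurableSet_Ici
  set g : ℕ → Ω → ℝ := fun k => (A k).indicator (fun _ => (1:ℝ)) with hg
  -- pointwise partial sum
  have h_sum : ∀ n ω, (∑ k ∈ Finset.range n, g k) ω = ((min (Z ω) n : ℕ) : ℝ) := by
    intro n ω
    rw [Finset.sum_apply]
    induction n with
    | zero => simp
    | succ n ih =>
      rw [Finset.sum_range_succ, ih]
      by_cases h : n + 1 ≤ Z ω
      · have hm : ω ∈ A n := h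
        rw [show g n ω = 1 from Set.indicator_of_mem hm _]
        have h1 : min (Z ω) n = n := by omega
        have h2 : min (Z ω) (n+1) = n+1 := by omega
        rw [h1, h2]; push_cast; ring
      · have hm : ω ∉ A n := h
        rw [show g n ω = 0 from Set.indicator_of_notMem hm _]
        have h2 : min (Z ω) n = min (Z ω) (n+1) := by omega
        rw [h2]; ring
  -- step 4: eLpNorm of the indicator
  have h_ind : ∀ k, eLpNorm (g k) p ℙ = (ℙ (A k)) ^ (1/r) := by
    intro k
    rw [hg, eLpNorm_indicator_const (hAmeas k) hp0 hptop, hpReal]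
    simp
  -- step 5 per-term bound
  have h_term : ∀ k : ℕ, (ℙ (A k)) ^ (1/r) ≤ ENNReal.ofReal (C ^ (1/r) * a k) := by
    intro k
    have hb := hbound (k+1) (Nat.le_add_left 1 k)
    simp only [Nat.add_sub_cancel] at hb
    have hX : (0:ℝ) ≤ C * L ^ (((k:ℕ)+1 : ℝ) - 1/2) /
        Real.sqrt ((Nat.factorial (k+1) : ℝ) * (Nat.factorial k : ℝ)) := by
      positivity
    have h1 : ℙ (A k) ≤ ENNReal.ofReal (C * L ^ (((k:ℕ)+1 : ℝ) - 1/2) /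
        Real.sqrt ((Nat.factorial (k+1) : ℝ) * (Nat.factorial k : ℝ))) := by
      rw [ENNReal.le_ofReal_iff_toReal_le (measure_ne_top _ _) hX]
      convert hb using 4
      push_cast
      ring
    calc (ℙ (A k)) ^ (1/r) ≤ (ENNReal.ofReal (C * L ^ (((k:ℕ)+1 : ℝ) - 1/2) /
          Real.sqrt ((Nat.factorial (k+1) : ℝ) * (Nat.factorial k : ℝ)))) ^ (1/r) :=
        ENNReal.rpow_le_rpow h1 (by positivity)
      _ = ENNReal.ofReal ((C * L ^ (((k:ℕ)+1 : ℝ) - 1/2) /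
          Real.sqrt ((Nat.factorial (k+1) : ℝ) * (Nat.factorial k : ℝ))) ^ (1/r)) := by
        rw [← ENNReal.ofReal_rpow_of_nonneg hX (by positivity)]
      _ = ENNReal.ofReal (C ^ (1/r) * a k) := by
        congr 1
        have hF : (0:ℝ) < (Nat.factorial (k+1) : ℝ) * (Nat.factorial k : ℝ) := by positivity
        rw [Real.sqrt_eq_rpow, Real.div_rpow (by positivity) (Real.rpow_nonneg hF.le _),
          Real.mul_rpow hC.le (Real.rpow_nonneg hL.le _),
          ← Real.rpow_mul hL.le, ← Real.rpow_mul hF.le, ha]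
        congr 2 <;> ring
  -- tsum bound
  have h_tsum : (∑' k : ℕ, (ℙ (A k)) ^ (1/r)) ≤ ENNReal.ofReal (C^(1/r) * S) := by
    calc (∑' k : ℕ, (ℙ (A k)) ^ (1/r)) ≤ ∑' k : ℕ, ENNReal.ofReal (C^(1/r) * a k) :=
          ENNReal.tsum_le_tsum h_term
      _ = ENNReal.ofReal (∑' k : ℕ, C^(1/r) * a k) :=
          (ENNReal.ofReal_tsum_of_nonneg (fun k => mul_nonneg (by positivity) (ha_nonneg k))
            (ha_summable.mul_left _)).symm
      _ = ENNReal.ofReal (C^(1/r) * S) := by rw [tsum_mul_left]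
  have hgmeas : ∀ k, AEStronglyMeasurable (g k) ℙ := fun k =>
    (measurable_const.indicator (hAmeas k)).aestronglyMeasurable
  have h_Fn : ∀ n, eLpNorm (∑ k ∈ Finset.range n, g k) p ℙ ≤ ENNReal.ofReal (C^(1/r)*S) := by
    intro n
    calc eLpNorm (∑ k ∈ Finset.range n, g k) p ℙ
        ≤ ∑ k ∈ Finset.range n, eLpNorm (g k) p ℙ := eLpNorm_sum_le (fun k _ => hgmeas k) hp1
      _ = ∑ k ∈ Finset.range n, (ℙ (A k))^(1/r) := Finset.sum_congr rfl (fun k _ => h_ind k)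
      _ ≤ ∑' k : ℕ, (ℙ (A k))^(1/r) := ENNReal.sum_le_tsum _
      _ ≤ _ := h_tsum
  have h_trunc : ∀ n, (∫⁻ ω, ENNReal.ofReal (((min (Z ω) n : ℕ):ℝ) ^ r))
      ≤ ENNReal.ofReal (C * S^r) := by
    intro n
    have hmeq : ∀ ω, ENNReal.ofReal (((min (Z ω) n : ℕ):ℝ) ^ r)
        = (‖(∑ k ∈ Finset.range n, g k) ω‖₊ : ℝ≥0∞) ^ r := by
      intro ω
      rw [h_sum n ω, ← enorm_eq_nnnorm, Real.enorm_eq_ofReal (by positivity),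
        ENNReal.ofReal_rpow_of_nonneg (by positivity) hr0.le]
    calc (∫⁻ ω, ENNReal.ofReal (((min (Z ω) n : ℕ):ℝ) ^ r))
        = ∫⁻ ω, (‖(∑ k ∈ Finset.range n, g k) ω‖₊ : ℝ≥0∞) ^ r := lintegral_congr hmeq
      _ = (eLpNorm (∑ k ∈ Finset.range n, g k) p ℙ) ^ r := by
          rw [eLpNorm_eq_lintegral_rpow_enorm_toReal hp0 hptop, hpReal, ← ENNReal.rpow_mul,
            one_div_mul_cancel hr0.ne', ENNReal.rpow_one]; rfl
      _ ≤ (ENNReal.ofReal (C^(1/r)*S))^r := ENNReal.rpow_le_rpow (h_Fn n) hr0.le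
      _ = ENNReal.ofReal ((C^(1/r)*S)^r) := ENNReal.ofReal_rpow_of_nonneg (by positivity) hr0.le
      _ = ENNReal.ofReal (C * S^r) := by
          rw [Real.mul_rpow (by positivity) hS_nonneg, ← Real.rpow_mul hC.le,
            one_div_mul_cancel hr0.ne', Real.rpow_one]
  -- monotone convergence
  have h_meas : ∀ n : ℕ, Measurable (fun ω => ENNReal.ofReal (((min (Z ω) n : ℕ):ℝ) ^ r)) := by
    intro n
    exact (measurable_from_top (f := fun m : ℕ => ENNReal.ofReal (((min m n : ℕ):ℝ)^r))).comp hZ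
  have h_mono : Monotone (fun n : ℕ => fun ω => ENNReal.ofReal (((min (Z ω) n : ℕ):ℝ) ^ r)) := by
    intro n m hnm ω
    apply ENNReal.ofReal_le_ofReal
    apply Real.rpow_le_rpow (by positivity) _ hr0.le
    exact_mod_cast Nat.cast_le.mpr (min_le_min le_rfl hnm)
  have h_sup : ∀ ω, (⨆ n : ℕ, ENNReal.ofReal (((min (Z ω) n : ℕ):ℝ) ^ r))
      = ENNReal.ofReal ((Z ω : ℝ) ^ r) := by
    intro ω
    apply le_antisymm
    · apply iSup_le
      intro n
      apply ENNReal.ofReal_le_ofReal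
      apply Real.rpow_le_rpow (by positivity) _ hr0.le
      exact_mod_cast Nat.cast_le.mpr (min_le_left _ _)
    · apply le_iSup_of_le (Z ω)
      simp
  calc (∫⁻ ω, ENNReal.ofReal ((Z ω : ℝ) ^ r))
      = ∫⁻ ω, ⨆ n : ℕ, ENNReal.ofReal (((min (Z ω) n : ℕ):ℝ) ^ r) := by
        apply lintegral_congr
        intro ω
        rw [h_sup ω]
    _ = ⨆ n : ℕ, ∫⁻ ω, ENNReal.ofReal (((min (Z ω) n : ℕ):ℝ) ^ r) := lintegral_iSup h_meas h_mono
    _ ≤ ENNReal.ofReal (C * S^r) := iSup_le h_trunc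


theorem stmt14 {Ω : Type*} [MeasureSpace Ω] [IsProbabilityMeasure (ℙ : Measure Ω)]
    (Z : Ω → ℕ) (hZ : Measurable Z) (C L : ℝ) (hC : 0 < C) (hL : 0 < L)
    (hbound : ∀ k : ℕ, 1 ≤ k → (ℙ {ω | k ≤ Z ω}).toReal
        ≤ C * L ^ ((k : ℝ) - 1/2) /
          Real.sqrt ((Nat.factorial k : ℝ) * (Nat.factorial (k - 1) : ℝ))) :
    ∀ r : ℝ, 1 < r →
      ((∫ ω, (Z ω : ℝ) ^ r) ≤ C * (∑' k : ℕ,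
          L ^ ((2 * ((k : ℝ) + 1) - 1) / (2 * r)) /
            ((Nat.factorial (k + 1) : ℝ) * (Nat.factorial k : ℝ)) ^ (1 / (2 * r))) ^ r)
      ∧ ∀ m : ℕ, Integrable (fun ω => (Z ω : ℝ) ^ m) ℙ := by
  intro r hr
  have hr0 : 0 < r := lt_trans one_pos hr
  constructor
  · have hScore := core Z hZ C L hC hL hbound r hr
    have hS_nonneg : 0 ≤ (∑' k : ℕ,
        L ^ ((2 * ((k : ℝ) + 1) - 1) / (2 * r)) /
          ((Nat.factorial (k + 1) : ℝ) * (Nat.factorial k : ℝ)) ^ (1 / (2 * r))) :=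
      tsum_nonneg fun k => div_nonneg (Real.rpow_nonneg hL.le _)
        (Real.rpow_nonneg (by positivity) _)
    have h_nonneg : 0 ≤ᵐ[ℙ] fun ω => (Z ω : ℝ) ^ r :=
      Filter.Eventually.of_forall fun ω => Real.rpow_nonneg (by positivity) _
    have h_meas : Measurable (fun ω => (Z ω : ℝ) ^ r) :=
      (measurable_from_top (f := fun m : ℕ => ((m:ℝ)^r))).comp hZ
    rw [integral_eq_lintegral_of_nonneg_ae h_nonneg h_meas.aestronglyMeasurable]
    calc (∫⁻ ω, ENNReal.ofReal ((Z ω : ℝ) ^ r)).toReal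
        ≤ (ENNReal.ofReal (C * (∑' k : ℕ,
            L ^ ((2 * ((k : ℝ) + 1) - 1) / (2 * r)) /
              ((Nat.factorial (k + 1) : ℝ) * (Nat.factorial k : ℝ)) ^ (1 / (2 * r))) ^ r)).toReal :=
          ENNReal.toReal_mono ENNReal.ofReal_ne_top hScore
      _ = _ := ENNReal.toReal_ofReal (by positivity)
  · intro m
    have h_meas : Measurable (fun ω => (Z ω : ℝ) ^ m) :=
      (measurable_from_top (f := fun n : ℕ => ((n:ℝ)^m))).comp hZ
    refine ⟨h_meas.aestronglyMeasurable, ?_⟩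
    have hr2 : (1:ℝ) < (m:ℝ) + 2 := by
      have : (0:ℝ) ≤ (m:ℝ) := Nat.cast_nonneg m
      linarith
    have hScore := core Z hZ C L hC hL hbound ((m:ℝ)+2) hr2
    have h_pt : ∀ ω, ENNReal.ofReal ((Z ω : ℝ) ^ m)
        ≤ 1 + ENNReal.ofReal ((Z ω : ℝ) ^ ((m:ℝ)+2)) := by
      intro ω
      have hcast : (Z ω : ℝ) ^ ((m:ℝ)+2) = (Z ω : ℝ) ^ (m+2) := by
        rw [show ((m:ℝ)+2) = ((m+2 : ℕ) : ℝ) by push_cast; ring, Real.rpow_natCast]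
      rw [hcast]
      rcases Nat.eq_zero_or_pos (Z ω) with h0 | hpos
      · rw [h0]
        rcases Nat.eq_zero_or_pos m with hm | hm
        · simp [hm]
        · simp [Nat.pos_iff_ne_zero.mp hm]
      · have h1 : (1:ℝ) ≤ (Z ω : ℝ) := by exact_mod_cast hpos
        have : (Z ω : ℝ) ^ m ≤ (Z ω : ℝ) ^ (m+2) :=
          pow_le_pow_right₀ h1 (by omega)
        calc ENNReal.ofReal ((Z ω : ℝ) ^ m) ≤ ENNReal.ofReal ((Z ω : ℝ) ^ (m+2)) :=
              ENNReal.ofReal_le_ofReal this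
          _ ≤ 1 + ENNReal.ofReal ((Z ω : ℝ) ^ (m+2)) := le_add_self
    have h_fin : (∫⁻ ω, ENNReal.ofReal ((Z ω : ℝ) ^ m)) < ⊤ := by
      calc (∫⁻ ω, ENNReal.ofReal ((Z ω : ℝ) ^ m))
          ≤ ∫⁻ ω, (1 + ENNReal.ofReal ((Z ω : ℝ) ^ ((m:ℝ)+2))) := lintegral_mono h_pt
        _ = (∫⁻ (_ : Ω), (1:ℝ≥0∞)) + ∫⁻ ω, ENNReal.ofReal ((Z ω : ℝ) ^ ((m:ℝ)+2)) :=
            lintegral_add_left measurable_const _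
        _ < ⊤ := by
            apply ENNReal.add_lt_top.mpr
            constructor
            · simp
            · exact lt_of_le_of_lt hScore ENNReal.ofReal_lt_top
    rw [hasFiniteIntegral_iff_ofReal (Filter.Eventually.of_forall fun ω => by positivity)]
    exact h_fin
end
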